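/- There exist constants c₁, c₂, c₃, c₄ > 0 and a family of trees (t_n)_{n≥2} over the ranked alphabet {a, b, c} with rank(a) = 0, rank(b) = 1, rank(c) = 2, such that for all sufficiently large n: (i) c₁·n ≤ |t_n| ≤ c₂·n; (ii) c₃·log₂(n) ≤ depth(t_n) ≤ c₄·log₂(n); and (iii) the minimal dag of t_n has size at least n, i.e., t_n has at least n pairwise non-isomorphic subtrees. -/

import Mathlib

universe u v

/-- Finite rooted ordered labelled trees. -/
inductive RTree (L : Type u) : Type u
  | node : L → List (RTree L) → RTree L

namespace RTree

/-- The number of nodes of a tree. -/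
def size {L : Type u} : RTree L → ℕ
  | .node _ ts => 1 + (ts.attach.map (fun x => x.1.size)).sum
termination_by t => sizeOf t
decreasing_by simp_wf; have := List.sizeOf_lt_of_mem x.2; omega

/-- The list of labels of the nodes of a tree. -/
def labelsList {L : Type u} : RTree L → List L
  | .node f ts => f :: (ts.attach.map (fun x => x.1.labelsList)).flatten
termination_by t => sizeOf t
decreasing_by simp_wf; have := List.sizeOf_lt_of_mem x.2; omega

/-- The depth of a tree: the maximal number of edges on a path from the root
to a leaf. -/
def depth {L : Type u} : RTree L → ℕ
  | .node _ ts => (ts.attach.map (fun x => x.1.depth + 1)).foldr max 0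
termination_by t => sizeOf t
decreasing_by simp_wf; have := List.sizeOf_lt_of_mem x.2; omega

/-- `Subtree s t` holds iff `s` is the subtree of `t` rooted at some node
of `t`. -/
inductive Subtree {L : Type u} : RTree L → RTree L → Prop
  | refl (t : RTree L) : Subtree t t
  | child {s t : RTree L} {f : L} {ts : List (RTree L)} :
      t ∈ ts → Subtree s t → Subtree s (.node f ts)

/-- A tree is well-formed over a ranked alphabet if every node labelled by a
symbol of rank `k` has exactly `k` children. -/
inductive WF {L : Type u} (rk : L → ℕ) : RTree L → Prop
  | node {f : L} {ts : List (RTree L)} :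
      ts.length = rk f → (∀ t ∈ ts, WF rk t) → WF rk (.node f ts)

end RTree

/-- The ranked alphabet `{a, b, c}` with `rank(a) = 0`, `rank(b) = 1`,
`rank(c) = 2`. -/
inductive ABC : Type
  | a | b | c

/-- The rank function of the alphabet `{a, b, c}`. -/
def ABC.rk : ABC → ℕ
  | .a => 0
  | .b => 1
  | .c => 2


section Aux
open RTree

/-- Encode a bit string as a chain of unary/binary nodes. -/
def chain : List Bool → RTree ABC
  | [] => .node .a []
  | false :: w => .node .b [chain w]
  | true :: w => .node .c [chain w, .node .a []]

/-- Complete binary tree of `c`s of depth `k`, whose leaf with (reversed) path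
`q` prepended to `p` carries the chain encoding `(q ++ p) ++ (q ++ p)`. -/
def full : ℕ → List Bool → RTree ABC
  | 0, p => chain (p ++ p)
  | k+1, p => .node .c [full k (false :: p), full k (true :: p)]

lemma size_node {L : Type u} (f : L) (ts : List (RTree L)) :
    (RTree.node f ts).size = 1 + (ts.map RTree.size).sum := by
  rw [RTree.size, List.attach_map_val]

lemma depth_node {L : Type u} (f : L) (ts : List (RTree L)) :
    (RTree.node f ts).depth = (ts.map (fun t => t.depth + 1)).foldr max 0 := by
  rw [RTree.depth, List.attach_map_val (l := ts) (f := fun t => t.depth + 1)]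

lemma chain_wf (w : List Bool) : (chain w).WF ABC.rk := by
  induction w with
  | nil => exact .node rfl (by simp)
  | cons x w ih =>
    cases x
    · exact .node rfl (by simpa [chain] using ih)
    · refine .node rfl ?_
      intro t ht
      simp only [chain, List.mem_cons, List.mem_singleton] at ht
      rcases ht with rfl | rfl | h
      · exact ih
      · exact .node rfl (by simp)
      · simp at h

lemma full_wf (k : ℕ) (p : List Bool) : (full k p).WF ABC.rk := by
  induction k generalizing p with
  | zero => exact chain_wf _
  | succ k ih =>
    refine .node rfl ?_
    intro t ht
    simp only [full, List.mem_cons, List.mem_singleton] at ht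
    rcases ht with rfl | rfl | h
    · exact ih _
    · exact ih _
    · simp at h

lemma size_chain_le (w : List Bool) : (chain w).size ≤ 2 * w.length + 1 := by
  induction w with
  | nil => simp [chain, size_node]
  | cons x w ih =>
    cases x <;> simp only [chain, size_node, List.map_cons, List.map_nil,
      List.sum_cons, List.sum_nil, List.length_cons] <;> omega

lemma le_size_chain (w : List Bool) : w.length + 1 ≤ (chain w).size := by
  induction w with
  | nil => simp [chain, size_node]
  | cons x w ih =>
    cases x <;> simp only [chain, size_node, List.map_cons, List.map_nil,
      List.sum_cons, List.sum_nil, List.length_cons] <;> omega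

lemma depth_chain (w : List Bool) : (chain w).depth = w.length := by
  induction w with
  | nil => simp [chain, depth_node]
  | cons x w ih =>
    cases x <;> simp only [chain, depth_node, List.map_cons, List.map_nil,
      List.foldr_cons, List.foldr_nil, List.length_cons] <;> omega

lemma chain_inj : Function.Injective chain := by
  intro w
  induction w with
  | nil =>
    intro w' h
    cases w' with
    | nil => rfl
    | cons y w' => cases y <;> simp [chain] at h
  | cons x w ih =>
    intro w' h
    cases w' with
    | nil => cases x <;> simp [chain] at h
    | cons y w' =>
      cases x <;> cases y <;> simp only [chain, RTree.node.injEq, List.cons.injEq,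
        and_true, true_and, reduceCtorEq, false_and] at h
      · rw [ih h]
      · rw [ih h]

lemma subtree_trans {s t u : RTree ABC} (h1 : s.Subtree t) (h2 : t.Subtree u) :
    s.Subtree u := by
  induction h2 with
  | refl => exact h1
  | child mem _ ih => exact .child mem ih

lemma subtree_chain_drop (w : List Bool) (j : ℕ) :
    (chain (w.drop j)).Subtree (chain w) := by
  induction w generalizing j with
  | nil => rw [List.drop_nil]; exact .refl _
  | cons x w ih =>
    cases j with
    | zero => exact .refl _
    | succ j =>
      have h := ih j
      cases x
      · exact .child (f := ABC.b) (ts := [chain w]) (List.mem_singleton.2 rfl) h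
      · exact .child (f := ABC.c) (ts := [chain w, .node .a []]) (by simp) h

lemma subtree_full (k : ℕ) (p l : List Bool) (hl : l.length = k) :
    (chain ((l ++ p) ++ (l ++ p))).Subtree (full k p) := by
  induction k generalizing p l with
  | zero =>
    rw [List.length_eq_zero_iff] at hl
    subst hl
    have heq : ([] : List Bool) ++ p ++ ([] ++ p) = p ++ p := by simp
    rw [heq]
    exact .refl _
  | succ k ih =>
    rcases List.eq_nil_or_concat l with rfl | ⟨l', x, rfl⟩
    · simp at hl
    · have hlen : l'.length = k := by
        simp only [List.concat_eq_append, List.length_append, List.length_cons,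
          List.length_nil] at hl; omega
      have heq : l'.concat x ++ p = l' ++ (x :: p) := by
        simp [List.concat_eq_append]
      rw [heq]
      have h := ih (x :: p) l' hlen
      cases x
      · exact .child (f := ABC.c) (ts := [full k (false :: p), full k (true :: p)])
          (by simp) h
      · exact .child (f := ABC.c) (ts := [full k (false :: p), full k (true :: p)])
          (by simp) h

lemma size_full_le (k : ℕ) (p : List Bool) :
    (full k p).size + 1 ≤ 2 ^ k * (4 * (k + p.length) + 2) := by
  induction k generalizing p with
  | zero =>
    have := size_chain_le (p ++ p)
    simp only [full, List.length_append] at *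
    omega
  | succ k ih =>
    have h0 := ih (false :: p)
    have h1 := ih (true :: p)
    have hp : (2:ℕ) ^ k ≥ 1 := Nat.one_le_two_pow
    simp only [full, size_node, List.map_cons, List.map_nil, List.sum_cons,
      List.sum_nil, List.length_cons, pow_succ] at *
    nlinarith [h0, h1]

lemma le_size_full (k : ℕ) (p : List Bool) :
    2 ^ k * (2 * (k + p.length) + 2) ≤ (full k p).size + 1 := by
  induction k generalizing p with
  | zero =>
    have := le_size_chain (p ++ p)
    simp only [full, List.length_append] at *
    omega
  | succ k ih =>
    have h0 := ih (false :: p)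
    have h1 := ih (true :: p)
    have hp : (2:ℕ) ^ k ≥ 1 := Nat.one_le_two_pow
    simp only [full, size_node, List.map_cons, List.map_nil, List.sum_cons,
      List.sum_nil, List.length_cons, pow_succ] at *
    nlinarith [h0, h1]

lemma depth_full (k : ℕ) (p : List Bool) :
    (full k p).depth = k + 2 * (k + p.length) := by
  induction k generalizing p with
  | zero =>
    simp only [full, depth_chain, List.length_append]
    omega
  | succ k ih =>
    have h0 := ih (false :: p)
    have h1 := ih (true :: p)
    simp only [full, depth_node, List.map_cons, List.map_nil, List.foldr_cons,
      List.foldr_nil, List.length_cons] at *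
    omega

/-- The list of all subtrees of a tree. -/
def subList {L : Type u} : RTree L → List (RTree L)
  | .node f ts => .node f ts :: (ts.attach.map (fun x => subList x.1)).flatten
termination_by t => sizeOf t
decreasing_by simp_wf; have := List.sizeOf_lt_of_mem x.2; omega

lemma mem_subList_of_subtree {L : Type u} {s t : RTree L} (h : s.Subtree t) :
    s ∈ subList t := by
  induction h with
  | refl =>
    cases s with
    | node f ts => rw [subList]; exact List.mem_cons_self
  | child mem _ ih =>
    rw [subList]
    refine List.mem_cons_of_mem _ ?_
    rw [List.mem_flatten]
    exact ⟨subList _, List.mem_map.mpr ⟨⟨_, mem⟩, List.mem_attach _ _, rfl⟩, ih⟩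

lemma finite_subtrees {L : Type u} (t : RTree L) : {s : RTree L | s.Subtree t}.Finite :=
  (List.finite_toSet (subList t)).subset (fun _ hs => mem_subList_of_subtree hs)

lemma exists_m (n : ℕ) : ∃ m, n ≤ m * 2 ^ m :=
  ⟨n, Nat.le_mul_of_pos_right n (Nat.pow_pos (by norm_num))⟩

end Aux

/-- A family of trees of linear size and logarithmic depth
whose minimal dags have linear size (i.e. with linearly many pairwise distinct
subtrees). -/
theorem exists_shallow_trees_with_large_dag :
    ∃ (c₁ c₂ c₃ c₄ : ℝ), 0 < c₁ ∧ 0 < c₂ ∧ 0 < c₃ ∧ 0 < c₄ ∧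
      ∃ t : ℕ → RTree ABC, (∀ n, (t n).WF ABC.rk) ∧
        ∃ n₀ : ℕ, ∀ n : ℕ, n₀ ≤ n →
          (c₁ * (n : ℝ) ≤ ((t n).size : ℝ) ∧ ((t n).size : ℝ) ≤ c₂ * (n : ℝ)) ∧
          (c₃ * Real.logb 2 n ≤ ((t n).depth : ℝ) ∧
            ((t n).depth : ℝ) ≤ c₄ * Real.logb 2 n) ∧
          n ≤ {s : RTree ABC | s.Subtree (t n)}.ncard := by
  classical
  refine ⟨1, 24, 1, 6, one_pos, by norm_num, one_pos, by norm_num,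
    fun n => full (Nat.find (exists_m n)) [], fun n => full_wf _ _, 4, ?_⟩
  intro n hn
  set m := Nat.find (exists_m n) with hmdef
  have hm1 : n ≤ m * 2 ^ m := Nat.find_spec (exists_m n)
  -- m ≥ 2
  have hm2 : 2 ≤ m := by
    by_contra h
    interval_cases m <;> omega
  have hprev : (m - 1) * 2 ^ (m - 1) < n := by
    have := Nat.find_min (exists_m n) (show m - 1 < m by omega)
    omega
  -- abbreviations
  have hA1 : 1 ≤ 2 ^ (m - 1) := Nat.one_le_two_pow
  have h2m : 2 ^ m = 2 * 2 ^ (m - 1) := by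
    rw [← pow_succ']
    congr 1
    omega
  set A := 2 ^ (m - 1) with hAdef
  set P := m * A with hPdef
  have hPA : 2 * A ≤ P := Nat.mul_le_mul_right A hm2
  have hprev' : P - A < n := by
    have : (m - 1) * A = P - A := by
      rw [hPdef, Nat.sub_mul, one_mul]
    omega
  have hm1' : n ≤ 2 * P := by
    calc n ≤ m * 2 ^ m := hm1
    _ = 2 * P := by rw [h2m, hPdef]; ring
  -- size bounds
  have hsu : (full m []).size + 1 ≤ 8 * P + 4 * A := by
    have := size_full_le m []
    calc (full m []).size + 1 ≤ 2 ^ m * (4 * (m + ([] : List Bool).length) + 2) := this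
    _ = 8 * P + 4 * A := by
      simp only [List.length_nil, Nat.add_zero]
      rw [h2m, hPdef]; ring
  have hsl : 4 * P + 4 * A ≤ (full m []).size + 1 := by
    have := le_size_full m []
    calc (4:ℕ) * P + 4 * A = 2 ^ m * (2 * (m + ([] : List Bool).length) + 2) := by
          simp only [List.length_nil, Nat.add_zero]
          rw [h2m, hPdef]; ring
    _ ≤ (full m []).size + 1 := this
  -- depth
  have hd : (full m []).depth = 3 * m := by
    rw [depth_full]
    simp
    omega
  have hnR : (0:ℝ) < (n:ℝ) := by positivity
  refine ⟨⟨?_, ?_⟩, ⟨?_, ?_⟩, ?_⟩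
  · -- c₁ * n ≤ size
    rw [one_mul]
    have : n ≤ (full m []).size := by omega
    exact_mod_cast this
  · -- size ≤ 24 * n
    have : (full m []).size ≤ 24 * n := by omega
    calc ((full m []).size : ℝ) ≤ ((24 * n : ℕ) : ℝ) := by exact_mod_cast this
    _ = 24 * (n : ℝ) := by push_cast; ring
  · -- logb 2 n ≤ depth
    rw [one_mul, hd]
    have hn4 : (n:ℕ) ≤ 2 ^ (2 * m) := by
      calc n ≤ m * 2 ^ m := hm1
      _ ≤ 2 ^ m * 2 ^ m := Nat.mul_le_mul_right _ (Nat.le_of_lt (Nat.lt_two_pow_self (n := m)))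
      _ = 2 ^ (2 * m) := by rw [← pow_add]; ring_nf
    have : Real.logb 2 n ≤ (2 * m : ℕ) := by
      rw [Real.logb_le_iff_le_rpow (by norm_num) hnR]
      rw [Real.rpow_natCast]
      exact_mod_cast hn4
    calc Real.logb 2 n ≤ ((2 * m : ℕ) : ℝ) := this
    _ ≤ ((3 * m : ℕ) : ℝ) := by exact_mod_cast Nat.mul_le_mul_right m (by norm_num)
    _ = ((3 * m : ℕ) : ℝ) := rfl
  · -- depth ≤ 6 * logb 2 n
    rw [hd]
    have hlow : ((m - 1 : ℕ) : ℝ) ≤ Real.logb 2 n := by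
      rw [Real.le_logb_iff_rpow_le (by norm_num) hnR]
      rw [Real.rpow_natCast]
      have : (2:ℕ) ^ (m - 1) ≤ n := by omega
      exact_mod_cast this
    have hcast : ((m - 1 : ℕ) : ℝ) = (m : ℝ) - 1 := by
      have : (1:ℕ) ≤ m := by omega
      push_cast [this]
      ring
    rw [hcast] at hlow
    have hmR : (2:ℝ) ≤ (m:ℝ) := by exact_mod_cast hm2
    push_cast
    nlinarith [hlow, hmR]
  · -- dag size
    set g : Fin m × (Fin m → Bool) → RTree ABC :=
      fun q => chain ((List.ofFn q.2).drop q.1 ++ List.ofFn q.2) with hgdef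
    have hginj : Function.Injective g := by
      rintro ⟨j1, v1⟩ ⟨j2, v2⟩ h
      simp only [hgdef] at h
      have h' := chain_inj h
      have hlen : ((List.ofFn v1).drop j1 ++ List.ofFn v1).length
          = ((List.ofFn v2).drop j2 ++ List.ofFn v2).length := by rw [h']
      simp only [List.length_append, List.length_drop, List.length_ofFn] at hlen
      have hj : (j1 : ℕ) = (j2 : ℕ) := by
        have := j1.2
        have := j2.2
        omega
      have hv : List.ofFn v1 = List.ofFn v2 := by
        refine List.append_inj_right h' ?_
        simp [hj]
      have : v1 = v2 := List.ofFn_inj.mp hv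
      simp [Prod.ext_iff, this, Fin.ext_iff, hj]
    have hsub : Set.range g ⊆ {s : RTree ABC | s.Subtree (full m [])} := by
      rintro s ⟨⟨j, v⟩, rfl⟩
      simp only [hgdef, Set.mem_setOf_eq]
      have hlen : (List.ofFn v).length = m := List.length_ofFn (f := v)
      have hdrop : (List.ofFn v ++ List.ofFn v).drop j
          = (List.ofFn v).drop j ++ List.ofFn v := by
        rw [List.drop_append]
        have : (j : ℕ) - (List.ofFn v).length = 0 := by
          have := j.2; omega
        rw [this, List.drop_zero]
      have h1 : (chain ((List.ofFn v).drop j ++ List.ofFn v)).Subtree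
          (chain (List.ofFn v ++ List.ofFn v)) := by
        rw [← hdrop]; exact subtree_chain_drop _ _
      have h2 : (chain (List.ofFn v ++ List.ofFn v)).Subtree (full m []) := by
        have := subtree_full m [] (List.ofFn v) hlen
        simpa using this
      exact subtree_trans h1 h2
    have hcard : (Set.range g).ncard = m * 2 ^ m := by
      rw [← Nat.card_coe_set_eq, Nat.card_range_of_injective hginj]
      simp [Nat.card_eq_fintype_card]
    calc n ≤ m * 2 ^ m := hm1
    _ = (Set.range g).ncard := hcard.symm
    _ ≤ {s : RTree ABC | s.Subtree (full m [])}.ncard :=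
        Set.ncard_le_ncard hsub (finite_subtrees _)
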